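/- Let F be an algebraically closed field, L a set with |L| < |F|, and U ⊆ F^L an open set in the Zariski topology such that U = π_K^{-1}(U_K) for some finite K ⊆ L and open U_K ⊆ F^K (U is weakly stable). Then U is quasi-compact. -/

import Mathlib

/-- The Zariski topology on the affine space `σ → F`: it is generated by the complements
of zero loci of ideals of the polynomial ring `F[t_i | i ∈ σ]`. -/
def zariskiTopology (σ F : Type*) [Field F] : TopologicalSpace (σ → F) :=
  TopologicalSpace.generateFrom
    {U : Set (σ → F) | ∃ I : Ideal (MvPolynomial σ F), U = (MvPolynomial.zeroLocus F I)ᶜ}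

universe u v

namespace Stmt17Aux

open Cardinal MvPolynomial

variable {F : Type u} {σ : Type v} [Field F]

lemma mem_zeroLocus_iff_le {J : Ideal (MvPolynomial σ F)} {x : σ → F} :
    x ∈ zeroLocus F J ↔ J ≤ vanishingIdeal F {x} := by
  constructor
  · intro hx p hp y hy
    rw [Set.mem_singleton_iff] at hy
    subst hy; exact hx p hp
  · intro h p hp
    exact h hp x rfl

lemma zeroLocus_inf (I J : Ideal (MvPolynomial σ F)) :
    zeroLocus F (I ⊓ J) = zeroLocus F I ∪ zeroLocus F J := by
  apply Set.Subset.antisymm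
  · intro x hx
    by_cases hI : x ∈ zeroLocus F I
    · exact Or.inl hI
    · rw [mem_zeroLocus_iff] at hI
      push_neg at hI
      obtain ⟨p, hpI, hpx⟩ := hI
      refine Or.inr fun q hq => ?_
      have h0 : eval x (p * q) = 0 := hx _ ⟨I.mul_mem_right q hpI, J.mul_mem_left p hq⟩
      rw [map_mul] at h0
      exact (mul_eq_zero.1 h0).resolve_left hpx
  · rintro x (hx | hx)
    · exact zeroLocus_anti_mono inf_le_left hx
    · exact zeroLocus_anti_mono inf_le_right hx

lemma zeroLocus_iSup {ι : Sort*} (I : ι → Ideal (MvPolynomial σ F)) :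
    zeroLocus F (⨆ i, I i) = ⋂ i, zeroLocus F (I i) := by
  ext x
  simp only [Set.mem_iInter, mem_zeroLocus_iff_le, iSup_le_iff]

lemma zeroLocus_radical (I : Ideal (MvPolynomial σ F)) :
    zeroLocus F I.radical = zeroLocus F I := by
  apply Set.Subset.antisymm (zeroLocus_anti_mono I.le_radical)
  intro x hx p hp
  obtain ⟨n, hn⟩ := hp
  have h0 : (eval x p) ^ n = 0 := by
    rw [← map_pow]; exact hx _ hn
  rcases Nat.eq_zero_or_pos n with hn0 | hn0
  · subst hn0; simp at h0
  · exact pow_eq_zero_iff hn0.ne' |>.1 h0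

lemma isOpen_iff {U : Set (σ → F)} :
    @IsOpen _ (zariskiTopology σ F) U ↔
      ∃ I : Ideal (MvPolynomial σ F), U = (zeroLocus F I)ᶜ := by
  constructor
  · intro h
    induction h with
    | basic _ hs => exact hs
    | univ => exact ⟨⊤, by simp [zeroLocus_top]⟩
    | inter U V _ _ ihU ihV =>
      obtain ⟨I, rfl⟩ := ihU
      obtain ⟨J, rfl⟩ := ihV
      exact ⟨I ⊓ J, by rw [zeroLocus_inf, Set.compl_union]⟩
    | sUnion S _ ih =>
      choose I hI using fun s : S => ih s s.2
      refine ⟨⨆ s : S, I s, ?_⟩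
      rw [zeroLocus_iSup, Set.compl_iInter, Set.sUnion_eq_iUnion]
      exact Set.iUnion_congr fun s => hI s
  · rintro ⟨I, rfl⟩
    exact TopologicalSpace.isOpen_generateFrom_of_mem ⟨I, rfl⟩

lemma isClosed_iff {Z : Set (σ → F)} :
    @IsClosed _ (zariskiTopology σ F) Z ↔
      ∃ I : Ideal (MvPolynomial σ F), Z = zeroLocus F I := by
  constructor
  · intro h
    obtain ⟨I, hI⟩ := isOpen_iff.1 h.isOpen_compl
    exact ⟨I, by rw [← compl_compl Z, hI, compl_compl]⟩
  · rintro ⟨I, rfl⟩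
    letI : TopologicalSpace (σ → F) := zariskiTopology σ F
    exact ⟨isOpen_iff.2 ⟨I, rfl⟩⟩

/-- Every maximal ideal of `F[tᵢ : i ∈ σ]` with `|σ| < |F|`, `F` algebraically closed,
is the vanishing ideal of a point. -/
lemma maximal_eq_vanishingIdeal [IsAlgClosed F]
    (hcard : Cardinal.lift.{u} #σ < Cardinal.lift.{v} #F)
    (m : Ideal (MvPolynomial σ F)) (hm : m.IsMaximal) :
    ∃ x : σ → F, m = vanishingIdeal F {x} := by
  haveI := hm
  letI : Field (MvPolynomial σ F ⧸ m) := Ideal.Quotient.field m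
  cases finite_or_infinite σ with
  | inl h => exact (isMaximal_iff_eq_vanishingIdeal_singleton (I := m)).1 hm
  | inr h =>
    -- cardinality argument: the quotient field is algebraic over F
    have halg : Algebra.IsIntegral F (MvPolynomial σ F ⧸ m) := by
      rw [← Algebra.isAlgebraic_iff_isIntegral]
      constructor
      intro t
      by_contra ht
      have htr : Transcendental F t := ht
      have h1 := htr.linearIndependent_sub_inv.cardinal_lift_le_rank
      have h2 : Module.rank F (MvPolynomial σ F ⧸ m) ≤ Module.rank F (MvPolynomial σ F) :=
        LinearMap.rank_le_of_surjective (Ideal.Quotient.mkₐ F m).toLinearMap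
          (Ideal.Quotient.mkₐ_surjective F m)
      rw [MvPolynomial.rank_eq_lift, mk_finsupp_nat,
        max_eq_left (aleph0_le_mk σ)] at h2
      have h3 : Cardinal.lift.{v} #F ≤ Cardinal.lift.{u} #σ := by
        have := h1.trans (lift_le.2 h2)
        rw [lift_lift] at this
        rwa [lift_umax] at this
      exact absurd h3 (not_le.2 hcard)
    have hsurj : Function.Surjective (algebraMap F (MvPolynomial σ F ⧸ m)) :=
      IsAlgClosed.algebraMap_bijective_of_isIntegral.2
    have hinj : Function.Injective (algebraMap F (MvPolynomial σ F ⧸ m)) :=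
      (algebraMap F (MvPolynomial σ F ⧸ m)).injective
    let e : F ≃+* (MvPolynomial σ F ⧸ m) :=
      RingEquiv.ofBijective (algebraMap F _) ⟨hinj, hsurj⟩
    set x : σ → F := fun i => e.symm (Ideal.Quotient.mk m (X i)) with hx
    have key : (Ideal.Quotient.mk m : MvPolynomial σ F →+* _) =
        (e : F →+* _).comp (eval x : MvPolynomial σ F →+* F) := by
      apply MvPolynomial.ringHom_ext
      · intro a
        simp only [RingHom.comp_apply, eval_C]
        have : (e : F →+* _) a = algebraMap F (MvPolynomial σ F ⧸ m) a := rfl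
        rw [this, ← (Ideal.Quotient.mkₐ F m).commutes a]
        rfl
      · intro i
        simp only [RingHom.comp_apply, eval_X, hx]
        exact (e.apply_symm_apply _).symm
    refine ⟨x, ?_⟩
    ext p
    rw [mem_vanishingIdeal_singleton_iff, ← Ideal.Quotient.eq_zero_iff_mem, key]
    simp only [RingHom.comp_apply]
    constructor
    · intro h0
      have := congrArg e.symm h0
      simpa using this
    · intro h0; rw [aeval_eq_eval] at h0; rw [h0]; exact map_zero _

/-- Weak Nullstellensatz for `|σ| < |F|`. -/
lemma weak_nullstellensatz [IsAlgClosed F]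
    (hcard : Cardinal.lift.{u} #σ < Cardinal.lift.{v} #F)
    (J : Ideal (MvPolynomial σ F)) (hJ : J ≠ ⊤) :
    (zeroLocus F J).Nonempty := by
  obtain ⟨m, hm, hJm⟩ := Ideal.exists_le_maximal J hJ
  obtain ⟨x, rfl⟩ := maximal_eq_vanishingIdeal hcard m hm
  exact ⟨x, mem_zeroLocus_iff_le.2 hJm⟩

/-- Strong Nullstellensatz for `|σ| < |F|`. -/
lemma strong_nullstellensatz [IsAlgClosed F]
    (hcard : Cardinal.lift.{u} #σ < Cardinal.lift.{v} #F)
    (J : Ideal (MvPolynomial σ F)) :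
    vanishingIdeal F (zeroLocus F J) ≤ J.radical := by
  intro g hg
  -- Rabinowitsch trick in `MvPolynomial (Option σ) F`
  classical
  set ρ : MvPolynomial σ F →+* MvPolynomial (Option σ) F :=
    (rename (Option.some : σ → Option σ) : MvPolynomial σ F →ₐ[F] _).toRingHom with hρ
  set q : MvPolynomial (Option σ) F := 1 - X none * ρ g with hq
  set J' : Ideal (MvPolynomial (Option σ) F) := J.map ρ ⊔ Ideal.span {q} with hJ'
  have hcard' : Cardinal.lift.{u} #(Option σ) < Cardinal.lift.{v} #F := by
    rw [mk_option, lift_add, lift_one]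
    have hF : ℵ₀ ≤ Cardinal.lift.{v} #F := aleph0_le_lift.2 (aleph0_le_mk F)
    exact Cardinal.add_lt_of_lt hF hcard (lt_of_lt_of_le one_lt_aleph0 hF)
  have hempty : zeroLocus F J' = ∅ := by
    by_contra hne
    obtain ⟨y, hy⟩ := Set.nonempty_iff_ne_empty.2 hne
    have hyJ : (y ∘ Option.some) ∈ zeroLocus F J := by
      intro p hp
      have := hy (ρ p) (Ideal.mem_sup_left (Ideal.mem_map_of_mem ρ hp))
      rw [hρ, AlgHom.toRingHom_eq_coe, RingHom.coe_coe, aeval_eq_eval, eval_rename] at this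
      rwa [aeval_eq_eval]
    have hg0 : eval (y ∘ Option.some) g = 0 := hg _ hyJ
    have hq0 : eval y q = 0 := hy q (Ideal.mem_sup_right (Ideal.subset_span rfl))
    rw [hq, map_sub, map_one, map_mul, hρ, AlgHom.toRingHom_eq_coe, RingHom.coe_coe,
      eval_rename, hg0, mul_zero, sub_zero] at hq0
    exact one_ne_zero hq0
  have hJtop : J' = ⊤ := by
    by_contra hne
    obtain ⟨y, hy⟩ := weak_nullstellensatz hcard' J' hne
    rw [hempty] at hy
    exact hy
  -- localize at g
  set S := Localization.Away g with hS
  set alg : MvPolynomial σ F →+* S := algebraMap (MvPolynomial σ F) S with halg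
  set ψ : MvPolynomial (Option σ) F →+* S :=
    eval₂Hom (alg.comp C)
      (fun o => o.elim (IsLocalization.Away.invSelf g) fun i => alg (X i)) with hψ
  have hψρ : ψ.comp ρ = alg := by
    apply MvPolynomial.ringHom_ext
    · intro a
      simp [hψ, hρ, halg]
    · intro i
      simp [hψ, hρ]
  have hψq : ψ q = 0 := by
    have h1 : ψ (ρ g) = alg g := by rw [← hψρ]; rfl
    rw [hq, map_sub, map_one, map_mul, h1]
    have h2 : ψ (X none) = IsLocalization.Away.invSelf g := by simp [hψ]
    rw [h2]
    have h3 : alg g * IsLocalization.Away.invSelf g = 1 :=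
      IsLocalization.Away.mul_invSelf g
    rw [mul_comm, h3, sub_self]
  have hmap : Ideal.map alg J = ⊤ := by
    rw [Ideal.eq_top_iff_one]
    have h1 : (1 : S) ∈ Ideal.map ψ J' := by
      have : (1 : MvPolynomial (Option σ) F) ∈ J' := by rw [hJtop]; trivial
      simpa using Ideal.mem_map_of_mem ψ this
    rw [hJ', Ideal.map_sup, Ideal.map_map, hψρ, Ideal.map_span] at h1
    simp only [Set.image_singleton, hψq, Ideal.span_singleton_eq_bot.2 rfl, sup_bot_eq] at h1
    exact h1
  have h1 : (1 : S) ∈ Ideal.map (algebraMap (MvPolynomial σ F) S) J := by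
    rw [← halg, hmap]; trivial
  rw [IsLocalization.mem_map_algebraMap_iff (Submonoid.powers g) S] at h1
  obtain ⟨⟨⟨p, hp⟩, ⟨s, hs⟩⟩, hx⟩ := h1
  obtain ⟨n, rfl⟩ := hs
  rw [one_mul] at hx
  rw [IsLocalization.eq_iff_exists (Submonoid.powers g) S] at hx
  obtain ⟨⟨c, hc⟩, hcc⟩ := hx
  obtain ⟨k, rfl⟩ := hc
  refine ⟨k + n, ?_⟩
  have : g ^ k * g ^ n = g ^ k * p := hcc
  rw [← pow_add] at this
  rw [this]
  exact J.mul_mem_left _ hp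

end Stmt17Aux

/-- Over an algebraically closed field `F` with `|L| < |F|`, every weakly stable open
subset of the affine space `F^L` (i.e. one that is the preimage of an open subset of
`F^K` for a finite `K ⊆ L`) is quasi-compact in the Zariski topology. -/
theorem stmt17 {F : Type u} {L : Type v} [Field F] [IsAlgClosed F]
    (hcard : Cardinal.lift.{u} (Cardinal.mk L) < Cardinal.lift.{v} (Cardinal.mk F))
    (U : Set (L → F)) (hUo : @IsOpen (L → F) (zariskiTopology L F) U)
    (K : Finset L) (UK : Set (↥K → F))
    (hUKo : @IsOpen (↥K → F) (zariskiTopology ↥K F) UK)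
    (hpre : U = (fun (x : L → F) (i : ↥K) => x ↑i) ⁻¹' UK) :
    @IsCompact (L → F) (zariskiTopology L F) U := by
  classical
  open MvPolynomial Stmt17Aux in
  letI : TopologicalSpace (L → F) := zariskiTopology L F
  obtain ⟨IK, hIK⟩ := Stmt17Aux.isOpen_iff.1 hUKo
  set π : (L → F) → (↥K → F) := fun x i => x ↑i with hπ
  set ρ : MvPolynomial ↥K F →+* MvPolynomial L F :=
    (MvPolynomial.rename (Subtype.val : ↥K → L) : MvPolynomial ↥K F →ₐ[F] _).toRingHom with hρ
  set I' : Ideal (MvPolynomial L F) := IK.map ρ with hI'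
  have hcomap : ∀ x : L → F,
      Ideal.comap ρ (MvPolynomial.vanishingIdeal F {x}) = MvPolynomial.vanishingIdeal F {π x} := by
    intro x
    ext p
    simp only [Ideal.mem_comap, MvPolynomial.mem_vanishingIdeal_singleton_iff, hρ,
      AlgHom.toRingHom_eq_coe, RingHom.coe_coe, MvPolynomial.aeval_eq_eval, MvPolynomial.eval_rename]
    rfl
  have hUc : Uᶜ = MvPolynomial.zeroLocus F I' := by
    ext x
    rw [hpre]
    simp only [Set.mem_compl_iff, Set.mem_preimage, hIK, Set.not_notMem]
    rw [Stmt17Aux.mem_zeroLocus_iff_le, Stmt17Aux.mem_zeroLocus_iff_le, hI',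
      Ideal.map_le_iff_le_comap, hcomap]
  -- finite generation of I'
  obtain ⟨T0, hT0⟩ := IsNoetherian.noetherian IK
  have hT : I' = Ideal.span (↑(T0.image ρ) : Set (MvPolynomial L F)) := by
    have hT0' : Ideal.span (↑T0 : Set (MvPolynomial ↥K F)) = IK := hT0
    rw [hI', ← hT0', Ideal.map_span, Finset.coe_image]
  apply isCompact_of_finite_subfamily_closed
  intro ι Z hZc hZe
  have hZ : ∀ i, ∃ I : Ideal (MvPolynomial L F), Z i = MvPolynomial.zeroLocus F I := by
    intro i
    exact Stmt17Aux.isClosed_iff.1 (hZc i)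
  choose J hJ using hZ
  have hsub : MvPolynomial.zeroLocus F (⨆ i, J i) ⊆ Uᶜ := by
    rw [Stmt17Aux.zeroLocus_iSup]
    intro x hx
    intro hxU
    have : x ∈ U ∩ ⋂ i, Z i := ⟨hxU, by simpa [hJ] using hx⟩
    rw [hZe] at this
    exact this
  have key : I' ≤ (⨆ i, J i).radical := by
    calc I' ≤ MvPolynomial.vanishingIdeal F (MvPolynomial.zeroLocus F I') :=
          MvPolynomial.le_vanishingIdeal_zeroLocus I'
    _ ≤ MvPolynomial.vanishingIdeal F (MvPolynomial.zeroLocus F (⨆ i, J i)) :=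
          MvPolynomial.vanishingIdeal_anti_mono (hUc ▸ hsub)
    _ ≤ (⨆ i, J i).radical := Stmt17Aux.strong_nullstellensatz hcard _
  -- pick finite subfamilies for each generator
  have hgen : ∀ g ∈ T0.image ρ, ∃ s : Finset ι, g ∈ (⨆ i ∈ s, J i).radical := by
    intro g hgT
    have hgrad : g ∈ (⨆ i, J i).radical := key (hT ▸ Ideal.subset_span hgT)
    obtain ⟨n, hn⟩ := hgrad
    rw [Submodule.mem_iSup_iff_exists_finset] at hn
    obtain ⟨s, hs⟩ := hn
    exact ⟨s, n, hs⟩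
  choose s hs using hgen
  set t : Finset ι := (T0.image ρ).attach.biUnion (fun g => s g g.2) with ht
  refine ⟨t, ?_⟩
  have hle : I' ≤ (⨆ i ∈ t, J i).radical := by
    rw [hT, Ideal.span_le]
    intro g hgT
    have h1 : (⨆ i ∈ s g hgT, J i) ≤ ⨆ i ∈ t, J i := by
      refine iSup₂_le fun i hi => ?_
      have hit : i ∈ t := Finset.mem_biUnion.2 ⟨⟨g, hgT⟩, Finset.mem_attach _ _, hi⟩
      exact le_iSup₂_of_le i hit le_rfl
    exact Ideal.radical_mono h1 (hs g hgT)
  have hsub2 : (⋂ i ∈ t, Z i) ⊆ Uᶜ := by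
    intro x hx
    have hxV : x ∈ MvPolynomial.zeroLocus F (⨆ i ∈ t, J i) := by
      rw [Stmt17Aux.mem_zeroLocus_iff_le]
      refine iSup₂_le fun i hi => ?_
      have : x ∈ Z i := by
        simp only [Set.mem_iInter] at hx
        exact hx i hi
      rw [hJ i] at this
      exact Stmt17Aux.mem_zeroLocus_iff_le.1 this
    have : x ∈ MvPolynomial.zeroLocus F I' := by
      have h2 : x ∈ MvPolynomial.zeroLocus F ((⨆ i ∈ t, J i).radical) := by
        rw [Stmt17Aux.zeroLocus_radical]; exact hxV
      exact MvPolynomial.zeroLocus_anti_mono hle h2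
    rw [← hUc] at this
    exact this
  rw [Set.eq_empty_iff_forall_notMem]
  rintro x ⟨hxU, hxZ⟩
  exact hsub2 hxZ hxU
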